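/- Let A = (A_j)_{j≥1} be a partition of ℝ^d into cubes of side length s ∈ (0,1], X := [-1,1]^d, P a probability measure on X × {-1,1} with fixed posterior version η, and r ≥ s/2. If P has MNE β ∈ (0,∞] with constant c_MNE, then the approximation error of the infinite-sample histogram rule on N_r is bounded by R_{L_{N_r},P}(h_{P,s}) − R*_{L_{N_r},P} ≤ (c_MNE s)^β. -/

import Mathlib

open MeasureTheory Set Metric
open scoped Classical ENNReal NNReal

noncomputable section

namespace RefinedMargin

abbrev Pt (d : ℕ) := Fin d → ℝ

/-- The input space `X = [-1,1]^d` (with the supremum norm coming from `Fin d → ℝ`). -/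
def cubeX (d : ℕ) : Set (Pt d) := Set.Icc (fun _ => (-1 : ℝ)) (fun _ => (1 : ℝ))

variable {d : ℕ} {s : ℝ}

/-- `X_1 = {x ∈ X : η x > 1/2}`. -/
def X1 (η : Pt d → ℝ) : Set (Pt d) := {x | x ∈ cubeX d ∧ 1 / 2 < η x}

/-- `X_{-1} = {x ∈ X : η x < 1/2}`. -/
def Xm1 (η : Pt d → ℝ) : Set (Pt d) := {x | x ∈ cubeX d ∧ η x < 1 / 2}

/-- `X_0 = {x ∈ X : η x = 1/2}`. -/
def X0 (η : Pt d → ℝ) : Set (Pt d) := {x | x ∈ cubeX d ∧ η x = 1 / 2}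

/-- Distance to the decision boundary. -/
def Δ (η : Pt d → ℝ) (x : Pt d) : ℝ :=
  if x ∈ Xm1 η then Metric.infDist x (X1 η)
  else if x ∈ X1 η then Metric.infDist x (Xm1 η)
  else 0

/-- Relative boundary of `T` in `X`. -/
def relBoundary (X T : Set (Pt d)) : Set (Pt d) := closure T ∩ closure (X \ T) ∩ X

/-- `T` is `m`-rectifiable: the image of a bounded subset of `ℝ^m` under a Lipschitz map. -/
def IsRectifiable (m : ℕ) (T : Set (Pt d)) : Prop :=
  ∃ (B : Set (Fin m → ℝ)) (g : (Fin m → ℝ) → Pt d) (K : NNReal),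
    Bornology.IsBounded B ∧ LipschitzOnWith K g B ∧ g '' B = T

/-- Margin exponent `α` with constant `cME`. -/
def HasME (μ : Measure (Pt d)) (η : Pt d → ℝ) (α cME : ℝ) : Prop :=
  ∀ t : ℝ, 0 < t → μ {x | Δ η x < t} ≤ ENNReal.ofReal ((cME * t) ^ α)

/-- Margin-noise exponent `β` with constant `cMNE`. -/
def HasMNE (μ : Measure (Pt d)) (η : Pt d → ℝ) (β cMNE : ℝ) : Prop :=
  ∀ t : ℝ, 0 < t → (∫ x in {x | Δ η x < t}, |2 * η x - 1| ∂μ) ≤ (cMNE * t) ^ β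

/-- The distance to the decision boundary controls the noise from below with
exponent `γ` and constant `cLC`. -/
def LowerControl (μ : Measure (Pt d)) (η : Pt d → ℝ) (γ cLC : ℝ) : Prop :=
  ∀ᵐ x ∂μ, Δ η x ^ γ ≤ cLC * |2 * η x - 1|

/-- A partition of `ℝ^d` into (half-open) cubes of side length `s`. -/
structure CubePartition (d : ℕ) (s : ℝ) where
  cell : ℕ → Set (Pt d)
  isCube : ∀ j, ∃ a : Pt d, cell j = {x | ∀ i, a i ≤ x i ∧ x i < a i + s}
  covers : ∀ x : Pt d, ∃! j, x ∈ cell j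

namespace CubePartition

/-- Index of the unique cell containing `x`. -/
def idx (𝒜 : CubePartition d s) (x : Pt d) : ℕ := (𝒜.covers x).choose

/-- The unique cell `A(x)` containing `x`. -/
def cellOf (𝒜 : CubePartition d s) (x : Pt d) : Set (Pt d) := 𝒜.cell (𝒜.idx x)

/-- Indices of cells intersecting `X`. -/
def J (𝒜 : CubePartition d s) : Set ℕ := {j | (𝒜.cell j ∩ cubeX d).Nonempty}

/-- Indices of cells near the decision boundary. -/
def JN (𝒜 : CubePartition d s) (η : Pt d → ℝ) (r : ℝ) : Set ℕ :=
  {j | j ∈ 𝒜.J ∧ ∀ x ∈ 𝒜.cell j ∩ cubeX d, Δ η x ≤ 3 * r}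

/-- Indices of cells far from the decision boundary. -/
def JF (𝒜 : CubePartition d s) (η : Pt d → ℝ) (r : ℝ) : Set ℕ :=
  {j | j ∈ 𝒜.J ∧ ∀ x ∈ 𝒜.cell j ∩ cubeX d, r ≤ Δ η x}

/-- `N_r`, the union of the cells near the decision boundary. -/
def Nr (𝒜 : CubePartition d s) (η : Pt d → ℝ) (r : ℝ) : Set (Pt d) := ⋃ j ∈ 𝒜.JN η r, 𝒜.cell j

/-- `F_r`, the union of the cells far from the decision boundary. -/
def Fr (𝒜 : CubePartition d s) (η : Pt d → ℝ) (r : ℝ) : Set (Pt d) := ⋃ j ∈ 𝒜.JF η r, 𝒜.cell j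

end CubePartition

/-- `sign` with the convention `sign 0 = 1`. -/
def sgn (t : ℝ) : ℝ := if 0 ≤ t then 1 else -1

/-- The classification loss `L(y,t) = 1_{(-∞,0]}(y · sign t)`. -/
def cLoss (y t : ℝ) : ℝ := if y * sgn t ≤ 0 then 1 else 0

/-- The restricted classification loss `L_T(x,y,t) = 1_T(x) L(y,t)`. -/
def rLoss (T : Set (Pt d)) (x : Pt d) (y t : ℝ) : ℝ := if x ∈ T then cLoss y t else 0

/-- The joint distribution `P` on `X × {-1,1} ⊆ ℝ^d × ℝ` built from the marginal `μ = P_X`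
and the posterior probability `η`. -/
def joint (μ : Measure (Pt d)) (η : Pt d → ℝ) : Measure (Pt d × ℝ) :=
  μ.bind fun x =>
    ENNReal.ofReal (η x) • Measure.dirac (x, 1) + ENNReal.ofReal (1 - η x) • Measure.dirac (x, -1)

/-- The risk `R_{L_T,P}(f)`. -/
def risk (P : Measure (Pt d × ℝ)) (T : Set (Pt d)) (f : Pt d → ℝ) : ℝ :=
  ∫ z, rLoss T z.1 z.2 (f z.1) ∂P

/-- The Bayes risk `R*_{L_T,P}`, the infimum over all measurable functions. -/
def bayesRisk (P : Measure (Pt d × ℝ)) (T : Set (Pt d)) : ℝ :=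
  ⨅ f : { f : Pt d → ℝ // Measurable f }, risk P T f.1

/-- The Bayes decision function `sign (2η - 1)`. -/
def bayesF (η : Pt d → ℝ) (x : Pt d) : ℝ := sgn (2 * η x - 1)

/-- The empirical risk of `f` on the dataset `D` for the restricted loss `L_T`. -/
def empRisk {n : ℕ} (D : Fin n → Pt d × ℝ) (T : Set (Pt d)) (f : Pt d → ℝ) : ℝ :=
  (∑ i, rLoss T (D i).1 (D i).2 (f (D i).1)) / (n : ℝ)

/-- `f_{D,s}`. -/
def fHat (𝒜 : CubePartition d s) {n : ℕ} (D : Fin n → Pt d × ℝ) (x : Pt d) : ℝ :=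
  ((∑ i, if (D i).2 = 1 ∧ (D i).1 ∈ 𝒜.cellOf x then (1 : ℝ) else 0) -
      ∑ i, if (D i).2 = -1 ∧ (D i).1 ∈ 𝒜.cellOf x then (1 : ℝ) else 0) / (n : ℝ)

/-- The empirical histogram rule `h_{D,s} = sign f_{D,s}`. -/
def histRule (𝒜 : CubePartition d s) {n : ℕ} (D : Fin n → Pt d × ℝ) (x : Pt d) : ℝ :=
  sgn (fHat 𝒜 D x)

/-- `f_{P,s}`. -/
def fBar (𝒜 : CubePartition d s) (P : Measure (Pt d × ℝ)) (x : Pt d) : ℝ :=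
  (P (𝒜.cellOf x ×ˢ ({1} : Set ℝ))).toReal - (P (𝒜.cellOf x ×ˢ ({-1} : Set ℝ))).toReal

/-- The infinite-sample histogram rule `h_{P,s} = sign f_{P,s}`. -/
def histRuleP (𝒜 : CubePartition d s) (P : Measure (Pt d × ℝ)) (x : Pt d) : ℝ :=
  sgn (fBar 𝒜 P x)

/-- The class `𝓕` of `±1`-valued functions which are constant on the cells meeting `X`
(and `0` elsewhere). -/
def histClass (𝒜 : CubePartition d s) : Set (Pt d → ℝ) :=
  {f | ∃ c : ℕ → ℝ, (∀ j, c j = 1 ∨ c j = -1) ∧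
    ∀ x, f x = if 𝒜.idx x ∈ 𝒜.J then c (𝒜.idx x) else 0}

/-- The `n`-fold product measure `P^n`. -/
def Pn (μ : Measure (Pt d)) (η : Pt d → ℝ) (n : ℕ) : Measure (Fin n → Pt d × ℝ) :=
  Measure.pi fun _ => joint μ η

/-! ### Auxiliary lemmas -/

section Aux

lemma sgn_nonneg_iff {t : ℝ} : (0 : ℝ) ≤ sgn t ↔ 0 ≤ t := by
  unfold sgn
  rcases le_or_gt 0 t with h | h
  · rw [if_pos h]; norm_num [h]
  · rw [if_neg (not_le.2 h)]; constructor <;> intro h2 <;> linarith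

lemma measurable_sgn : Measurable sgn := by
  unfold sgn
  exact Measurable.ite (measurableSet_le measurable_const measurable_id)
    measurable_const measurable_const

/-- The transition kernel used to build `joint`. -/
def kernel (η : Pt d → ℝ) (x : Pt d) : Measure (Pt d × ℝ) :=
  ENNReal.ofReal (η x) • Measure.dirac (x, 1) + ENNReal.ofReal (1 - η x) • Measure.dirac (x, -1)

lemma joint_eq (μ : Measure (Pt d)) (η : Pt d → ℝ) : joint μ η = μ.bind (kernel η) := rfl

lemma measurable_kernel {η : Pt d → ℝ} (hmη : Measurable η) :
    Measurable (kernel (d := d) η) := by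
  apply Measure.measurable_of_measurable_coe
  intro u hu
  have h1 : ∀ x : Pt d, kernel η x u
      = ENNReal.ofReal (η x) * u.indicator 1 (x, (1 : ℝ))
        + ENNReal.ofReal (1 - η x) * u.indicator 1 (x, (-1 : ℝ)) := by
    intro x
    simp [kernel, Measure.dirac_apply' _ hu]
  simp_rw [h1]
  exact ((ENNReal.measurable_ofReal.comp hmη).mul
      ((measurable_one.indicator hu).comp (measurable_id.prodMk measurable_const))).add
    ((ENNReal.measurable_ofReal.comp (measurable_const.sub hmη)).mul
      ((measurable_one.indicator hu).comp (measurable_id.prodMk measurable_const)))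

lemma lintegral_kernel (η : Pt d → ℝ) (x : Pt d) {g : Pt d × ℝ → ℝ≥0∞} (hg : Measurable g) :
    ∫⁻ z, g z ∂(kernel η x)
      = ENNReal.ofReal (η x) * g (x, 1) + ENNReal.ofReal (1 - η x) * g (x, -1) := by
  unfold kernel
  rw [lintegral_add_measure, lintegral_smul_measure, lintegral_smul_measure,
    lintegral_dirac' _ hg, lintegral_dirac' _ hg, smul_eq_mul, smul_eq_mul]

lemma joint_prod_pos {μ : Measure (Pt d)} {η : Pt d → ℝ} (hmη : Measurable η)
    {A : Set (Pt d)} (hA : MeasurableSet A) :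
    joint μ η (A ×ˢ ({1} : Set ℝ)) = ∫⁻ x in A, ENNReal.ofReal (η x) ∂μ := by
  rw [joint_eq, Measure.bind_apply (hA.prod (measurableSet_singleton 1))
    (measurable_kernel hmη).aemeasurable]
  have h1 : ∀ x : Pt d, kernel η x (A ×ˢ ({1} : Set ℝ))
      = A.indicator (fun x => ENNReal.ofReal (η x)) x := by
    intro x
    have hu : MeasurableSet (A ×ˢ ({1} : Set ℝ)) := hA.prod (measurableSet_singleton 1)
    have hm1 : ((x, (-1 : ℝ)) ∈ A ×ˢ ({1} : Set ℝ)) = False := by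
      simp [Set.mem_prod]; norm_num
    simp [kernel, Measure.dirac_apply' _ hu, Set.indicator_apply, Set.mem_prod, hm1]
  simp_rw [h1]
  rw [lintegral_indicator hA]

lemma joint_prod_neg {μ : Measure (Pt d)} {η : Pt d → ℝ} (hmη : Measurable η)
    {A : Set (Pt d)} (hA : MeasurableSet A) :
    joint μ η (A ×ˢ ({-1} : Set ℝ)) = ∫⁻ x in A, ENNReal.ofReal (1 - η x) ∂μ := by
  rw [joint_eq, Measure.bind_apply (hA.prod (measurableSet_singleton (-1)))
    (measurable_kernel hmη).aemeasurable]
  have h1 : ∀ x : Pt d, kernel η x (A ×ˢ ({-1} : Set ℝ))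
      = A.indicator (fun x => ENNReal.ofReal (1 - η x)) x := by
    intro x
    have hu : MeasurableSet (A ×ˢ ({-1} : Set ℝ)) := hA.prod (measurableSet_singleton (-1))
    have hm1 : ((x, (1 : ℝ)) ∈ A ×ˢ ({-1} : Set ℝ)) = False := by
      simp [Set.mem_prod]; norm_num
    simp [kernel, Measure.dirac_apply' _ hu, Set.indicator_apply, Set.mem_prod, hm1]
  simp_rw [h1]
  rw [lintegral_indicator hA]

lemma risk_eq (μ : Measure (Pt d)) (η : Pt d → ℝ)
    (hη : ∀ x, η x ∈ Set.Icc (0 : ℝ) 1) (hmη : Measurable η)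
    {T : Set (Pt d)} (hT : MeasurableSet T) {f : Pt d → ℝ} (hf : Measurable f) :
    risk (joint μ η) T f
      = ∫ x, T.indicator (fun x => if 0 ≤ f x then 1 - η x else η x) x ∂μ := by
  set F : Pt d → ℝ := fun x => T.indicator (fun x => if 0 ≤ f x then 1 - η x else η x) x with hF
  have hFm : Measurable F :=
    (Measurable.ite (measurableSet_le measurable_const hf)
      (measurable_const.sub hmη) hmη).indicator hT
  have hF0 : ∀ x, 0 ≤ F x := by
    intro x
    rw [hF]
    apply Set.indicator_nonneg
    intro y _
    have := hη y
    split <;> [linarith [this.2]; exact this.1]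
  have hgm : Measurable (fun z : Pt d × ℝ => rLoss T z.1 z.2 (f z.1)) := by
    simp only [rLoss, cLoss]
    exact Measurable.ite (hT.preimage measurable_fst)
      (Measurable.ite
        (measurableSet_le
          (measurable_snd.mul ((measurable_sgn.comp hf).comp measurable_fst))
          measurable_const)
        measurable_const measurable_const)
      measurable_const
  have hg0 : ∀ z : Pt d × ℝ, 0 ≤ rLoss T z.1 z.2 (f z.1) := by
    intro z
    simp only [rLoss, cLoss]
    split <;> [skip; norm_num]
    split <;> norm_num
  unfold risk
  rw [integral_eq_lintegral_of_nonneg_ae (ae_of_all _ hg0) hgm.aestronglyMeasurable]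
  have hgm' : Measurable fun z : Pt d × ℝ => ENNReal.ofReal (rLoss T z.1 z.2 (f z.1)) :=
    ENNReal.measurable_ofReal.comp hgm
  rw [joint_eq, Measure.lintegral_bind (measurable_kernel hmη).aemeasurable hgm'.aemeasurable]
  have key : ∀ x : Pt d,
      ∫⁻ z, ENNReal.ofReal (rLoss T z.1 z.2 (f z.1)) ∂(kernel η x) = ENNReal.ofReal (F x) := by
    intro x
    rw [lintegral_kernel η x hgm']
    have h0 := (hη x).1
    have h1 := (hη x).2
    by_cases hxT : x ∈ T
    · by_cases hfx : 0 ≤ f x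
      · have hsg : sgn (f x) = 1 := if_pos hfx
        simp only [rLoss, cLoss, hsg, if_pos hxT, hF, Set.indicator_of_mem hxT, if_pos hfx]
        norm_num
      · have hsg : sgn (f x) = -1 := if_neg hfx
        simp only [rLoss, cLoss, hsg, if_pos hxT, hF, Set.indicator_of_mem hxT, if_neg hfx]
        norm_num
    · simp [rLoss, hF, Set.indicator_of_notMem hxT, if_neg hxT]
  rw [lintegral_congr key]
  rw [integral_eq_lintegral_of_nonneg_ae (ae_of_all _ hF0) hFm.aestronglyMeasurable]

lemma integrable_of_bound {μ : Measure (Pt d)} [IsProbabilityMeasure μ] {g : Pt d → ℝ}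
    (hg : Measurable g) (hb : ∀ x, |g x| ≤ 1) : Integrable g μ :=
  (integrable_const 1).mono' hg.aestronglyMeasurable (ae_of_all _ fun x => by simpa using hb x)

namespace CubePartition

lemma mem_cellOf (𝒜 : CubePartition d s) (x : Pt d) : x ∈ 𝒜.cellOf x :=
  (𝒜.covers x).choose_spec.1

lemma idx_eq (𝒜 : CubePartition d s) {x : Pt d} {j : ℕ} (hx : x ∈ 𝒜.cell j) :
    𝒜.idx x = j :=
  ((𝒜.covers x).choose_spec.2 j hx).symm

lemma cellOf_eq (𝒜 : CubePartition d s) {x : Pt d} {j : ℕ} (hx : x ∈ 𝒜.cell j) :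
    𝒜.cellOf x = 𝒜.cell j := by
  rw [cellOf, 𝒜.idx_eq hx]

lemma cell_measurable (𝒜 : CubePartition d s) (j : ℕ) : MeasurableSet (𝒜.cell j) := by
  obtain ⟨a, ha⟩ := 𝒜.isCube j
  rw [ha]
  have : {x : Pt d | ∀ i, a i ≤ x i ∧ x i < a i + s}
      = ⋂ i, ({x : Pt d | a i ≤ x i} ∩ {x : Pt d | x i < a i + s}) := by
    ext x; simp [Set.mem_iInter, forall_and]
  rw [this]
  exact MeasurableSet.iInter fun i =>
    ((measurableSet_le measurable_const (measurable_pi_apply i)).inter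
      (measurableSet_lt (measurable_pi_apply i) measurable_const))

lemma measurable_idx (𝒜 : CubePartition d s) : Measurable 𝒜.idx := by
  apply measurable_to_countable'
  intro j
  have : 𝒜.idx ⁻¹' {j} = 𝒜.cell j := by
    ext x
    constructor
    · intro h
      have hx : 𝒜.idx x = j := h
      rw [← hx]; exact 𝒜.mem_cellOf x
    · intro h; exact 𝒜.idx_eq h
  rw [this]; exact 𝒜.cell_measurable j

lemma dist_lt_of_mem_cell (𝒜 : CubePartition d s) (hs : 0 < s) {x y : Pt d} {j : ℕ}
    (hx : x ∈ 𝒜.cell j) (hy : y ∈ 𝒜.cell j) : dist x y < s := by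
  obtain ⟨a, ha⟩ := 𝒜.isCube j
  rw [ha] at hx hy
  rw [dist_pi_lt_iff hs]
  intro i
  have h1 := hx i
  have h2 := hy i
  rw [Real.dist_eq, abs_sub_lt_iff]
  constructor <;> linarith [h1.1, h1.2, h2.1, h2.2]

lemma measurableSet_Nr (𝒜 : CubePartition d s) (η : Pt d → ℝ) (r : ℝ) :
    MeasurableSet (𝒜.Nr η r) :=
  MeasurableSet.biUnion (Set.to_countable _) fun j _ => 𝒜.cell_measurable j

end CubePartition

lemma measurable_fBar (𝒜 : CubePartition d s) (P : Measure (Pt d × ℝ)) :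
    Measurable (fBar 𝒜 P) := by
  have : fBar 𝒜 P = (fun j : ℕ =>
      (P (𝒜.cell j ×ˢ ({1} : Set ℝ))).toReal - (P (𝒜.cell j ×ˢ ({-1} : Set ℝ))).toReal)
      ∘ 𝒜.idx := rfl
  rw [this]
  exact measurable_from_top.comp 𝒜.measurable_idx

lemma measurable_Δ {η : Pt d → ℝ} (hmη : Measurable η) : Measurable (Δ η) := by
  have hX : MeasurableSet (cubeX d) := measurableSet_Icc
  have hXm1 : MeasurableSet (Xm1 η) := hX.inter (measurableSet_lt hmη measurable_const)
  have hX1 : MeasurableSet (X1 η) := hX.inter (measurableSet_lt measurable_const hmη)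
  unfold Δ
  exact Measurable.ite hXm1 (continuous_infDist_pt _).measurable
    (Measurable.ite hX1 (continuous_infDist_pt _).measurable measurable_const)

end Aux

theorem statement19 (d : ℕ) (hd : 1 ≤ d) (s : ℝ) (hs : s ∈ Set.Ioc (0 : ℝ) 1)
    (𝒜 : CubePartition d s)
    (μ : Measure (Pt d)) [IsProbabilityMeasure μ] (hμX : μ (cubeX d)ᶜ = 0)
    (η : Pt d → ℝ) (hη : ∀ x, η x ∈ Set.Icc (0 : ℝ) 1) (hmeasη : Measurable η)
    (r : ℝ) (hr : s / 2 ≤ r)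
    (β cMNE : ℝ) (hβ : 0 < β) (hcMNE : 0 < cMNE) (hMNE : HasMNE μ η β cMNE) :
    risk (joint μ η) (𝒜.Nr η r) (histRuleP 𝒜 (joint μ η)) -
        bayesRisk (joint μ η) (𝒜.Nr η r) ≤ (cMNE * s) ^ β := by
  classical
  set P := joint μ η with hP
  set T := 𝒜.Nr η r with hTdef
  have hT : MeasurableSet T := 𝒜.measurableSet_Nr η r
  have hfBm : Measurable (fBar 𝒜 P) := measurable_fBar 𝒜 P
  have hhm : Measurable (histRuleP 𝒜 P) := measurable_sgn.comp hfBm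
  -- the three integrands
  set G : Pt d → ℝ := fun x => T.indicator (fun x => if 0 ≤ fBar 𝒜 P x then 1 - η x else η x) x
    with hGdef
  set M : Pt d → ℝ := fun x => T.indicator (fun x => min (η x) (1 - η x)) x with hMdef
  have hΔs : MeasurableSet {x : Pt d | Δ η x < s} :=
    measurableSet_lt (measurable_Δ hmeasη) measurable_const
  set Ψ : Pt d → ℝ := fun x => Set.indicator {x : Pt d | Δ η x < s} (fun x => |2 * η x - 1|) x
    with hΨdef
  have hΨ0 : ∀ x, 0 ≤ Ψ x := fun x => Set.indicator_nonneg (fun y _ => abs_nonneg _) x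
  -- measurability & integrability
  have hGm : Measurable G :=
    (Measurable.ite (measurableSet_le measurable_const hfBm)
      (measurable_const.sub hmeasη) hmeasη).indicator hT
  have hMm : Measurable M := (hmeasη.min (measurable_const.sub hmeasη)).indicator hT
  have hΨm : Measurable Ψ :=
    (((hmeasη.const_mul 2).sub measurable_const).abs).indicator hΔs
  have habs : ∀ {g : Pt d → ℝ} {S : Set (Pt d)}, (∀ y, |g y| ≤ 1) →
      ∀ x, |S.indicator g x| ≤ 1 := by
    intro g S hg x
    by_cases hx : x ∈ S
    · rw [Set.indicator_of_mem hx]; exact hg x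
    · rw [Set.indicator_of_notMem hx]; norm_num
  have hGb : ∀ x, |G x| ≤ 1 := by
    apply habs
    intro y
    have h := hη y
    split <;> rw [abs_le] <;> exact ⟨by linarith [h.1, h.2], by linarith [h.1, h.2]⟩
  have hMb : ∀ x, |M x| ≤ 1 := by
    apply habs
    intro y
    have h := hη y
    rw [abs_le]
    constructor
    · have : (0:ℝ) ≤ min (η y) (1 - η y) := le_min h.1 (by linarith [h.2])
      linarith
    · exact le_trans (min_le_left _ _) h.2
  have hΨb : ∀ x, |Ψ x| ≤ 1 := by
    apply habs
    intro y
    have h := hη y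
    rw [abs_abs, abs_le]
    exact ⟨by linarith [h.1], by linarith [h.2]⟩
  have hGint : Integrable G μ := integrable_of_bound hGm hGb
  have hMint : Integrable M μ := integrable_of_bound hMm hMb
  have hΨint : Integrable Ψ μ := integrable_of_bound hΨm hΨb
  -- risk of the histogram rule
  have hrisk : risk P T (histRuleP 𝒜 P) = ∫ x, G x ∂μ := by
    rw [hP, risk_eq μ η hη hmeasη hT hhm]
    have hcongr : (fun x : Pt d => if 0 ≤ histRuleP 𝒜 P x then 1 - η x else η x)
        = fun x => if 0 ≤ fBar 𝒜 P x then 1 - η x else η x := by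
      funext x
      show (if 0 ≤ sgn (fBar 𝒜 P x) then 1 - η x else η x) = _
      by_cases hc : 0 ≤ fBar 𝒜 P x
      · rw [if_pos (sgn_nonneg_iff.2 hc), if_pos hc]
      · rw [if_neg (fun hh => hc (sgn_nonneg_iff.1 hh)), if_neg hc]
    rw [hP] at hcongr ⊢
    rw [hcongr]
  -- lower bound for the Bayes risk
  have hbayes : ∫ x, M x ∂μ ≤ bayesRisk P T := by
    have : Nonempty {f : Pt d → ℝ // Measurable f} := ⟨⟨0, measurable_const⟩⟩
    apply le_ciInf
    rintro ⟨f, hf⟩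
    rw [hP, risk_eq μ η hη hmeasη hT hf]
    have hfint : Integrable
        (fun x => T.indicator (fun x => if 0 ≤ f x then 1 - η x else η x) x) μ := by
      apply integrable_of_bound
      · exact (Measurable.ite (measurableSet_le measurable_const hf)
          (measurable_const.sub hmeasη) hmeasη).indicator hT
      · apply habs
        intro y
        have h := hη y
        split <;> rw [abs_le] <;> exact ⟨by linarith [h.1, h.2], by linarith [h.1, h.2]⟩
    apply integral_mono hMint hfint
    intro x
    by_cases hxT : x ∈ T
    · rw [hMdef]
      simp only [Set.indicator_of_mem hxT]
      split
      · exact min_le_right _ _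
      · exact min_le_left _ _
    · rw [hMdef]
      simp only [Set.indicator_of_notMem hxT]
      exact le_refl 0
  -- the cell-wise lintegrals
  set I1 : ℕ → ℝ≥0∞ := fun j => ∫⁻ y in 𝒜.cell j, ENNReal.ofReal (η y) ∂μ with hI1def
  set I2 : ℕ → ℝ≥0∞ := fun j => ∫⁻ y in 𝒜.cell j, ENNReal.ofReal (1 - η y) ∂μ with hI2def
  have hI1top : ∀ j, I1 j ≠ ⊤ := by
    intro j
    refine ne_of_lt (lt_of_le_of_lt (le_trans (lintegral_mono fun y => ?_)
      (le_of_eq (setLIntegral_one _))) (measure_lt_top μ _))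
    exact ENNReal.ofReal_le_one.2 (hη y).2
  have hI2top : ∀ j, I2 j ≠ ⊤ := by
    intro j
    refine ne_of_lt (lt_of_le_of_lt (le_trans (lintegral_mono fun y => ?_)
      (le_of_eq (setLIntegral_one _))) (measure_lt_top μ _))
    exact ENNReal.ofReal_le_one.2 (by linarith [(hη y).1])
  have hfBar_eq : ∀ x : Pt d, fBar 𝒜 P x = (I1 (𝒜.idx x)).toReal - (I2 (𝒜.idx x)).toReal := by
    intro x
    show (P (𝒜.cell (𝒜.idx x) ×ˢ ({1} : Set ℝ))).toReal
        - (P (𝒜.cell (𝒜.idx x) ×ˢ ({-1} : Set ℝ))).toReal = _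
    rw [hP, joint_prod_pos hmeasη (𝒜.cell_measurable _),
      joint_prod_neg hmeasη (𝒜.cell_measurable _)]
  -- the exceptional null set
  set B : ℕ → Set (Pt d) := fun j => {x | x ∈ 𝒜.cell j ∧ η x < 1/2 ∧ 0 ≤ fBar 𝒜 P x ∧
      μ (𝒜.cell j ∩ {y | 1/2 < η y}) = 0} with hBdef
  have hB0 : ∀ j, μ (B j) = 0 := by
    intro j
    by_cases hne : (B j).Nonempty
    · obtain ⟨x0, hx0⟩ := hne
      simp only [hBdef, Set.mem_setOf_eq] at hx0
      obtain ⟨hx0c, hx0η, hx0f, hnull⟩ := hx0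
      have hidx : 𝒜.idx x0 = j := 𝒜.idx_eq hx0c
      have hfb : (I2 j).toReal ≤ (I1 j).toReal := by
        have h := hfBar_eq x0
        rw [hidx] at h
        linarith [hx0f, h ▸ hx0f]
      have hI2le : I2 j ≤ I1 j := (ENNReal.toReal_le_toReal (hI2top j) (hI1top j)).1 hfb
      have hae : ∀ᵐ x ∂μ, x ∉ 𝒜.cell j ∩ {y | 1/2 < η y} :=
        (measure_eq_zero_iff_ae_notMem).1 hnull
      have hm3 : Measurable fun y : Pt d => ENNReal.ofReal (1 - 2 * η y) :=
        ENNReal.measurable_ofReal.comp (measurable_const.sub (hmeasη.const_mul 2))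
      have hsplit : I2 j = (∫⁻ x in 𝒜.cell j, ENNReal.ofReal (1 - 2 * η x) ∂μ) + I1 j := by
        have h1 : ∫⁻ x in 𝒜.cell j, ENNReal.ofReal (1 - η x) ∂μ
            = ∫⁻ x in 𝒜.cell j, (ENNReal.ofReal (1 - 2 * η x) + ENNReal.ofReal (η x)) ∂μ := by
          apply setLIntegral_congr_fun_ae (𝒜.cell_measurable j)
          filter_upwards [hae] with x hx hxc
          have hηx : η x ≤ 1/2 := by
            by_contra hc
            exact hx ⟨hxc, by push_neg at hc; exact hc⟩
          rw [← ENNReal.ofReal_add (by linarith) (hη x).1]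
          congr 1
          ring
        simp only [hI1def, hI2def]
        rw [h1, lintegral_add_left hm3]
      have hI30 : (∫⁻ x in 𝒜.cell j, ENNReal.ofReal (1 - 2 * η x) ∂μ) = 0 := by
        have h2 : (∫⁻ x in 𝒜.cell j, ENNReal.ofReal (1 - 2 * η x) ∂μ) + I1 j ≤ 0 + I1 j := by
          rw [zero_add, ← hsplit]; exact hI2le
        have h3 := (ENNReal.add_le_add_iff_right (hI1top j)).1 h2
        simpa using h3
      have hae2 : ∀ᵐ x ∂μ, x ∈ 𝒜.cell j → ENNReal.ofReal (1 - 2 * η x) = 0 :=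
        (setLIntegral_eq_zero_iff' (𝒜.cell_measurable j) hm3.aemeasurable).1 hI30
      have hz : μ (𝒜.cell j ∩ {y | η y < 1/2}) = 0 := by
        rw [measure_eq_zero_iff_ae_notMem]
        filter_upwards [hae2] with x hx hmem
        have h4 := hx hmem.1
        rw [ENNReal.ofReal_eq_zero] at h4
        have := hmem.2
        simp only [Set.mem_setOf_eq] at this
        linarith
      refine measure_mono_null ?_ hz
      intro x hx
      simp only [hBdef, Set.mem_setOf_eq] at hx
      exact ⟨hx.1, hx.2.1⟩
    · rw [Set.not_nonempty_iff_eq_empty.1 hne]; exact measure_empty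
  have hN : μ (⋃ j, B j) = 0 := measure_iUnion_null hB0
  have haeX : ∀ᵐ x ∂μ, x ∈ cubeX d := by
    rw [ae_iff]
    exact hμX
  have haeN : ∀ᵐ x ∂μ, x ∉ ⋃ j, B j := (measure_eq_zero_iff_ae_notMem).1 hN
  -- finding a nearby point with opposite label
  have hfind : ∀ (j : ℕ) (S : Set (Pt d)), μ (𝒜.cell j ∩ S) ≠ 0 →
      (𝒜.cell j ∩ S ∩ cubeX d).Nonempty := by
    intro j S hpos
    by_contra hc
    rw [Set.not_nonempty_iff_eq_empty] at hc
    apply hpos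
    refine measure_mono_null (fun y hy => ?_) hμX
    intro hyX
    exact absurd (Set.mem_inter hy hyX) (by rw [hc]; exact Set.notMem_empty y)
  -- geometric lemma, case fBar < 0, η > 1/2
  have hgeoA : ∀ x : Pt d, x ∈ cubeX d → 1/2 < η x → fBar 𝒜 P x < 0 → Δ η x < s := by
    intro x hxX hxη hxf
    have hxc : x ∈ 𝒜.cell (𝒜.idx x) := 𝒜.mem_cellOf x
    have hI : (I1 (𝒜.idx x)).toReal < (I2 (𝒜.idx x)).toReal := by
      have h := hfBar_eq x
      linarith [h ▸ hxf]
    have hIlt : I1 (𝒜.idx x) < I2 (𝒜.idx x) :=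
      (ENNReal.toReal_lt_toReal (hI1top _) (hI2top _)).1 hI
    have hpos : μ (𝒜.cell (𝒜.idx x) ∩ {y | η y < 1/2}) ≠ 0 := by
      intro h0
      have hae : ∀ᵐ y ∂μ, y ∉ 𝒜.cell (𝒜.idx x) ∩ {y | η y < 1/2} :=
        (measure_eq_zero_iff_ae_notMem).1 h0
      have hle : I2 (𝒜.idx x) ≤ I1 (𝒜.idx x) := by
        apply setLIntegral_mono_ae ((ENNReal.measurable_ofReal.comp hmeasη).aemeasurable)
        filter_upwards [hae] with y hy hyc
        have h5 : ¬ η y < 1/2 := fun hc => hy ⟨hyc, hc⟩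
        exact ENNReal.ofReal_le_ofReal (by linarith [le_of_not_gt h5])
      exact absurd hIlt (not_lt.2 hle)
    obtain ⟨x', hx'⟩ := hfind _ _ hpos
    have hx'm : x' ∈ Xm1 η := ⟨hx'.2, hx'.1.2⟩
    have hxnotm : x ∉ Xm1 η := fun h => absurd h.2 (by linarith)
    have hx1 : x ∈ X1 η := ⟨hxX, hxη⟩
    have hΔeq : Δ η x = infDist x (Xm1 η) := by
      unfold Δ
      rw [if_neg hxnotm, if_pos hx1]
    rw [hΔeq]
    calc infDist x (Xm1 η) ≤ dist x x' := infDist_le_dist_of_mem hx'm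
      _ < s := 𝒜.dist_lt_of_mem_cell hs.1 hxc hx'.1.1
  -- geometric lemma, case fBar ≥ 0, η < 1/2
  have hgeoB : ∀ x : Pt d, x ∈ cubeX d → η x < 1/2 → 0 ≤ fBar 𝒜 P x →
      x ∉ (⋃ j, B j) → Δ η x < s := by
    intro x hxX hxη hxf hxN
    have hxc : x ∈ 𝒜.cell (𝒜.idx x) := 𝒜.mem_cellOf x
    have hnb : x ∉ B (𝒜.idx x) := fun h => hxN (Set.mem_iUnion.2 ⟨_, h⟩)
    have hpos : μ (𝒜.cell (𝒜.idx x) ∩ {y | 1/2 < η y}) ≠ 0 := by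
      intro h0
      exact hnb ⟨hxc, hxη, hxf, h0⟩
    obtain ⟨x', hx'⟩ := hfind _ _ hpos
    have hx'1 : x' ∈ X1 η := ⟨hx'.2, hx'.1.2⟩
    have hxm : x ∈ Xm1 η := ⟨hxX, hxη⟩
    have hΔeq : Δ η x = infDist x (X1 η) := by
      unfold Δ
      rw [if_pos hxm]
    rw [hΔeq]
    calc infDist x (X1 η) ≤ dist x x' := infDist_le_dist_of_mem hx'1
      _ < s := 𝒜.dist_lt_of_mem_cell hs.1 hxc hx'.1.1
  -- the a.e. pointwise bound
  have haeBound : ∀ᵐ x ∂μ, G x - M x ≤ Ψ x := by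
    filter_upwards [haeX, haeN] with x hxX hxN
    by_cases hxT : x ∈ T
    · rw [hGdef, hMdef]
      simp only [Set.indicator_of_mem hxT]
      rcases le_or_gt ((if 0 ≤ fBar 𝒜 P x then 1 - η x else η x) - min (η x) (1 - η x)) 0
        with hD | hD
      · exact le_trans hD (hΨ0 x)
      · by_cases hf0 : 0 ≤ fBar 𝒜 P x
        · rw [if_pos hf0] at hD ⊢
          have hmin : min (η x) (1 - η x) = η x := by
            rcases min_cases (η x) (1 - η x) with ⟨h1, _⟩ | ⟨h1, _⟩
            · exact h1
            · rw [h1] at hD; linarith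
          rw [hmin] at hD ⊢
          have hηx : η x < 1/2 := by linarith
          have hΔx : Δ η x < s := hgeoB x hxX hηx hf0 hxN
          have hΨx : Ψ x = |2 * η x - 1| := by
            have hmem : x ∈ {x : Pt d | Δ η x < s} := hΔx
            simp only [hΨdef]
            exact Set.indicator_of_mem hmem _
          rw [hΨx, abs_of_nonpos (by linarith)]
          linarith
        · rw [if_neg hf0] at hD ⊢
          have hmin : min (η x) (1 - η x) = 1 - η x := by
            rcases min_cases (η x) (1 - η x) with ⟨h1, _⟩ | ⟨h1, _⟩
            · rw [h1] at hD; linarith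
            · exact h1
          rw [hmin] at hD ⊢
          have hηx : 1/2 < η x := by linarith
          have hΔx : Δ η x < s := hgeoA x hxX hηx (lt_of_not_ge hf0)
          have hΨx : Ψ x = |2 * η x - 1| := by
            have hmem : x ∈ {x : Pt d | Δ η x < s} := hΔx
            simp only [hΨdef]
            exact Set.indicator_of_mem hmem _
          rw [hΨx, abs_of_nonneg (by linarith)]
          linarith
    · rw [hGdef, hMdef]
      simp only [Set.indicator_of_notMem hxT]
      simpa using hΨ0 x
  -- putting everything together
  calc risk P T (histRuleP 𝒜 P) - bayesRisk P T
      ≤ (∫ x, G x ∂μ) - ∫ x, M x ∂μ := sub_le_sub (le_of_eq hrisk) hbayes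
    _ = ∫ x, (G x - M x) ∂μ := (integral_sub hGint hMint).symm
    _ ≤ ∫ x, Ψ x ∂μ := integral_mono_ae (hGint.sub hMint) hΨint haeBound
    _ = ∫ x in {x : Pt d | Δ η x < s}, |2 * η x - 1| ∂μ := integral_indicator hΔs
    _ ≤ (cMNE * s) ^ β := hMNE s hs.1

end RefinedMargin
end
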